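/- Let A : ℓ¹(ℕ) → Y and x† ∈ ℓ¹(ℕ) satisfy Assumption (source condition): for each n, a family M_n of index sets of cardinality n containing {1,…,n}, such that for each sign sequence ξ supported in some M ∈ M_n there is η ∈ Y* with ‖η‖ ≤ γ_n, P_{supp ξ}A*η = ξ, and ‖(I−P_{supp ξ})A*η‖_∞ ≤ c for fixed c ∈ [0,1). Then with β = (1−c)/(1+c) and φ(t) = 2 inf_n ( inf_{M∈M_n} ‖(I−P_M)x†‖₁ + γ_n t/(1+c) ), the variational inequality β‖x − x†‖₁ ≤ ‖x‖₁ − ‖x†‖₁ + φ(‖Ax − Ax†‖_Y) holds for all x ∈ ℓ¹(ℕ). -/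

import Mathlib

noncomputable section

abbrev L1 : Type := lp (fun _ : ℕ => ℝ) 1

def e (k : ℕ) : L1 := lp.single 1 k 1

def norm1On (M : Set ℕ) (x : L1) : ℝ :=
  ∑' k, M.indicator (fun k => |(x : ℕ → ℝ) k|) k

/-- A sign sequence supported in the index set `M`. -/
def SignIn (ξ : ℕ → ℝ) (M : Finset ℕ) : Prop :=
  (∀ k, ξ k = -1 ∨ ξ k = 0 ∨ ξ k = 1) ∧ ∀ k ∉ M, ξ k = 0

lemma L1_summable (x : L1) : Summable fun k => |(x : ℕ → ℝ) k| := by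
  have := (lp.memℓp x).summable (p := 1) (by norm_num)
  simpa [Real.norm_eq_abs] using this

lemma L1_norm (x : L1) : ‖x‖ = ∑' k, |(x : ℕ → ℝ) k| := by
  have := lp.norm_eq_tsum_rpow (p := 1) (by norm_num) x
  simpa [Real.norm_eq_abs] using this

lemma norm1On_eq (M : Set ℕ) (x : L1) :
    norm1On M x = ∑' k : M, |(x : ℕ → ℝ) k| := (tsum_subtype M _).symm

set_option maxHeartbeats 1000000 in
/-- Main theorem: under the unified source condition, the variational inequality
`β ‖x - x†‖₁ ≤ ‖x‖₁ - ‖x†‖₁ + φ(‖Ax - Ax†‖)` holds with `β = (1-c)/(1+c)` and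
`φ(t) = 2 inf_n ( inf_{M ∈ 𝓜 n} ‖(I-P_M)x†‖₁ + γ n · t/(1+c) )`. -/
theorem stmt13 {Y : Type*} [NormedAddCommGroup Y] [NormedSpace ℝ Y]
    (A : L1 →L[ℝ] Y) (xdag : L1)
    (𝓜 : ℕ → Set (Finset ℕ))
    (hcard : ∀ n, ∀ M ∈ 𝓜 n, M.card = n)
    (hrange : ∀ n, Finset.range n ∈ 𝓜 n)
    (c : ℝ) (hc0 : 0 ≤ c) (hc1 : c < 1)
    (γ : ℕ → ℝ) (hγpos : ∀ n, 0 < γ n)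
    (hsource : ∀ n, ∀ M ∈ 𝓜 n, ∀ ξ : ℕ → ℝ, SignIn ξ M →
      ∃ η : StrongDual ℝ Y, ‖η‖ ≤ γ n ∧
        (∀ k, ξ k ≠ 0 → η (A (e k)) = ξ k) ∧
        (∀ k, ξ k = 0 → |η (A (e k))| ≤ c)) :
    ∀ x : L1, ((1 - c) / (1 + c)) * ‖x - xdag‖ ≤ ‖x‖ - ‖xdag‖ +
      (⨅ n : ℕ, 2 * ((⨅ M : 𝓜 n, norm1On (↑(M : Finset ℕ))ᶜ xdag) +
        γ n * ‖A x - A xdag‖ / (1 + c))) := by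
  intro x
  have h1c : (0:ℝ) < 1 + c := by linarith
  set t : ℝ := ‖A x - A xdag‖ with ht
  have ht0 : 0 ≤ t := norm_nonneg _
  set u : L1 := x - xdag with hu
  -- core inequality for each n and M ∈ 𝓜 n
  have core : ∀ n : ℕ, ∀ M : Finset ℕ, M ∈ 𝓜 n →
      ((1 - c) / (1 + c)) * ‖u‖ ≤ ‖x‖ - ‖xdag‖ +
        2 * (norm1On (↑M)ᶜ xdag + γ n * t / (1 + c)) := by
    intro n M hM
    -- the sign sequence
    set ξ : ℕ → ℝ := fun k => if k ∈ M then Real.sign ((u : ℕ → ℝ) k) else 0 with hξ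
    have hsign : SignIn ξ M := by
      constructor
      · intro k
        by_cases hk : k ∈ M
        · simp only [hξ, if_pos hk]
          rcases lt_trichotomy ((u : ℕ → ℝ) k) 0 with h | h | h
          · left; exact Real.sign_of_neg h
          · right; left; rw [h]; exact Real.sign_zero
          · right; right; exact Real.sign_of_pos h
        · right; left; simp [hξ, hk]
      · intro k hk; simp [hξ, hk]
    obtain ⟨η, hηn, hη1, hη2⟩ := hsource n M hM ξ hsign
    -- summability facts
    have hsu : Summable fun k => |(u : ℕ → ℝ) k| := L1_summable u
    have hsx : Summable fun k => |(x : ℕ → ℝ) k| := L1_summable x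
    have hsd : Summable fun k => |(xdag : ℕ → ℝ) k| := L1_summable xdag
    -- names for the pieces
    set a : ℝ := ∑ k ∈ M, |(u : ℕ → ℝ) k| with ha
    set b : ℝ := ∑' k : {k // k ∉ M}, |(u : ℕ → ℝ) k| with hb
    set ax : ℝ := ∑ k ∈ M, |(x : ℕ → ℝ) k| with hax
    set bx : ℝ := ∑' k : {k // k ∉ M}, |(x : ℕ → ℝ) k| with hbx
    set ad : ℝ := ∑ k ∈ M, |(xdag : ℕ → ℝ) k| with had
    set bd : ℝ := ∑' k : {k // k ∉ M}, |(xdag : ℕ → ℝ) k| with hbd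
    have hnormu : ‖u‖ = a + b := by
      rw [L1_norm u, ← Summable.sum_add_tsum_subtype_compl hsu M]
    have hnormx : ‖x‖ = ax + bx := by
      rw [L1_norm x, ← Summable.sum_add_tsum_subtype_compl hsx M]
    have hnormd : ‖xdag‖ = ad + bd := by
      rw [L1_norm xdag, ← Summable.sum_add_tsum_subtype_compl hsd M]
    have hbd_eq : norm1On (↑M)ᶜ xdag = bd := by
      rw [norm1On_eq, hbd]
      exact ((Equiv.subtypeEquivRight (q := fun k => k ∈ (↑M : Set ℕ)ᶜ)
        (fun k => by simp)).tsum_eq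
        (fun k : ((↑M : Set ℕ)ᶜ : Set ℕ) => |(xdag : ℕ → ℝ) (k : ℕ)|)).symm
    -- representation of η (A u) as a sum
    haveI : Fact ((1:ENNReal) ≤ 1) := ⟨le_refl _⟩
    have hHS : HasSum (fun k : ℕ => lp.single 1 k ((u : ℕ → ℝ) k)) u :=
      lp.hasSum_single (by norm_num) u
    have hHS2 : HasSum (fun k : ℕ => (u : ℕ → ℝ) k * η (A (e k))) (η (A u)) := by
      have := (η.comp A).hasSum hHS
      refine this.congr_fun fun k => ?_
      have hsingle : lp.single 1 k ((u : ℕ → ℝ) k) = (u : ℕ → ℝ) k • e k := by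
        refine lp.ext (funext fun j => ?_)
        by_cases h : j = k
        · subst h
          simp [lp.single_apply_self, e, lp.coeFn_smul]
        · simp [lp.single_apply_ne _ _ _ h, e, lp.coeFn_smul, Pi.single_eq_of_ne h]
      simp [hsingle, smul_eq_mul]
    set S : ℕ → ℝ := fun k => (u : ℕ → ℝ) k * η (A (e k)) with hSdef
    -- the finite part equals a
    have hfin : ∑ k ∈ M, S k = a := by
      refine Finset.sum_congr rfl fun k hk => ?_
      by_cases h0 : (u : ℕ → ℝ) k = 0
      · simp [hSdef, h0]
      · have hξk : ξ k ≠ 0 := by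
          simp only [hξ, if_pos hk]
          exact fun h => h0 (Real.sign_eq_zero_iff.mp h)
        have := hη1 k hξk
        simp only [hSdef, this, hξ, if_pos hk]
        rcases lt_trichotomy ((u : ℕ → ℝ) k) 0 with h | h | h
        · rw [Real.sign_of_neg h, abs_of_neg h]; ring
        · exact absurd h h0
        · rw [Real.sign_of_pos h, abs_of_pos h]; ring
    -- splitting
    have hsplit : a + ∑' k : {k // k ∉ M}, S k = η (A u) := by
      rw [← hfin, ← hHS2.tsum_eq]
      exact Summable.sum_add_tsum_subtype_compl hHS2.summable M
    -- bound the tail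
    have htail_pt : ∀ k : {k // k ∉ M}, |S k| ≤ c * |(u : ℕ → ℝ) (k : ℕ)| := by
      rintro ⟨k, hk⟩
      have hξk : ξ k = 0 := hsign.2 k hk
      have := hη2 k hξk
      calc |S k| = |(u : ℕ → ℝ) k| * |η (A (e k))| := abs_mul _ _
        _ ≤ |(u : ℕ → ℝ) k| * c := by
            exact mul_le_mul_of_nonneg_left this (abs_nonneg _)
        _ = c * |(u : ℕ → ℝ) k| := mul_comm _ _
    have hsub_sum : Summable fun k : {k // k ∉ M} => |(u : ℕ → ℝ) (k : ℕ)| :=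
      (hsu.subtype _)
    have hsub_x : Summable fun k : {k // k ∉ M} => |(x : ℕ → ℝ) (k : ℕ)| :=
      (hsx.subtype _)
    have hsub_d : Summable fun k : {k // k ∉ M} => |(xdag : ℕ → ℝ) (k : ℕ)| :=
      (hsd.subtype _)
    have hS_abs_sum : Summable fun k : {k // k ∉ M} => |S k| :=
      Summable.of_nonneg_of_le (fun k => abs_nonneg _) htail_pt (hsub_sum.mul_left c)
    have htail : |∑' k : {k // k ∉ M}, S k| ≤ c * b := by
      have hsumS : Summable fun k : {k // k ∉ M} => S (k : ℕ) :=
        hHS2.summable.subtype _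
      calc |∑' k : {k // k ∉ M}, S k| ≤ ∑' k : {k // k ∉ M}, |S k| := by
            rw [abs_le]
            constructor
            · have := Summable.tsum_le_tsum (fun k : {k // k ∉ M} => neg_abs_le (S (k : ℕ)))
                hS_abs_sum.neg hsumS
              rw [tsum_neg] at this
              linarith
            · exact Summable.tsum_le_tsum (fun k => le_abs_self _) hsumS hS_abs_sum
        _ ≤ ∑' k : {k // k ∉ M}, c * |(u : ℕ → ℝ) (k : ℕ)| :=
            Summable.tsum_le_tsum htail_pt hS_abs_sum (hsub_sum.mul_left c)
        _ = c * b := by rw [hb, tsum_mul_left]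
    -- bound on |η (A u)|
    have hAu : A u = A x - A xdag := by rw [hu, map_sub]
    have hηAu : |η (A u)| ≤ γ n * t := by
      calc |η (A u)| = ‖η (A u)‖ := (Real.norm_eq_abs _).symm
        _ ≤ ‖η‖ * ‖A u‖ := η.le_opNorm _
        _ ≤ γ n * t := by
            rw [hAu]
            exact mul_le_mul hηn le_rfl (norm_nonneg _) (le_of_lt (hγpos n))
    -- key estimate F2 : a ≤ γ n * t + c * b
    have F2 : a ≤ γ n * t + c * b := by
      have : a = η (A u) - ∑' k : {k // k ∉ M}, S k := by linarith [hsplit]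
      rw [this]
      calc η (A u) - ∑' k : {k // k ∉ M}, S k
          ≤ |η (A u)| + |∑' k : {k // k ∉ M}, S k| := by
            have h1 := le_abs_self (η (A u))
            have h2 := neg_abs_le (∑' k : {k // k ∉ M}, S k)
            linarith
        _ ≤ γ n * t + c * b := add_le_add hηAu htail
    -- F3 pieces
    have F3a : ad ≤ ax + a := by
      rw [had, hax, ha, ← Finset.sum_add_distrib]
      refine Finset.sum_le_sum fun k _ => ?_
      have : (xdag : ℕ → ℝ) k = (x : ℕ → ℝ) k - (u : ℕ → ℝ) k := by
        simp [hu]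
      rw [this]
      exact (abs_sub _ _).trans (by simp)
    have F3b : b - bd ≤ bx := by
      have hpt : ∀ k : {k // k ∉ M},
          |(u : ℕ → ℝ) (k : ℕ)| ≤ |(x : ℕ → ℝ) (k : ℕ)| + |(xdag : ℕ → ℝ) (k : ℕ)| := by
        intro k
        have h1 : (u : ℕ → ℝ) (k : ℕ) = (x : ℕ → ℝ) (k : ℕ) - (xdag : ℕ → ℝ) (k : ℕ) := by
          simp [hu]
        rw [h1]
        exact abs_sub _ _
      have h2 : b ≤ ∑' k : {k // k ∉ M},
          (|(x : ℕ → ℝ) (k : ℕ)| + |(xdag : ℕ → ℝ) (k : ℕ)|) :=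
        Summable.tsum_le_tsum hpt hsub_sum (hsub_x.add hsub_d)
      rw [Summable.tsum_add hsub_x hsub_d] at h2
      linarith
    -- put things together
    rw [hnormu, hnormx, hnormd, hbd_eq]
    have hkey : (1 - c) / (1 + c) * (a + b) ≤ (b - a) + 2 * (γ n * t / (1 + c)) := by
      rw [div_mul_eq_mul_div, div_le_iff₀ h1c]
      have hcancel : ((b - a) + 2 * (γ n * t / (1 + c))) * (1 + c)
          = (b - a) * (1 + c) + 2 * (γ n * t) := by
        field_simp
      rw [hcancel]
      nlinarith [F2]
    have hb0 : 0 ≤ bd := tsum_nonneg fun k => abs_nonneg _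
    linarith
  -- assemble the infima
  have hmain : ∀ n : ℕ, ((1 - c) / (1 + c)) * ‖u‖ - (‖x‖ - ‖xdag‖) ≤
      2 * ((⨅ M : 𝓜 n, norm1On (↑(M : Finset ℕ))ᶜ xdag) + γ n * t / (1 + c)) := by
    intro n
    haveI : Nonempty (𝓜 n) := ⟨⟨Finset.range n, hrange n⟩⟩
    have hinf : (((1 - c) / (1 + c)) * ‖u‖ - (‖x‖ - ‖xdag‖)) / 2 - γ n * t / (1 + c) ≤
        ⨅ M : 𝓜 n, norm1On (↑(M : Finset ℕ))ᶜ xdag := by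
      refine le_ciInf fun M => ?_
      have := core n (M : Finset ℕ) M.2
      linarith
    linarith
  have hfinal : ((1 - c) / (1 + c)) * ‖u‖ - (‖x‖ - ‖xdag‖) ≤
      ⨅ n : ℕ, 2 * ((⨅ M : 𝓜 n, norm1On (↑(M : Finset ℕ))ᶜ xdag) +
        γ n * t / (1 + c)) := le_ciInf hmain
  linarith
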